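/- (Gradient kernel estimate from the proof of Lemma 6.1.2) Let d ≥ 1 be an integer and γ ∈ ℝ. Let ζ : ℝ^d_+ → [0,∞) be a nonnegative C¹ function with compact support contained in ℝ^d_+. For y, x ∈ ℝ^d_+ define ζ^y(x) = (x¹)^{γ+1} ζ(y¹x¹, y¹(y'−x')) (y¹)^{d−1}, and let D_x ζ^y denote the gradient of ζ^y in the variable x. Then for every x ∈ ℝ^d_+, ∫_{ℝ^d_+} |D_x ζ^y(x)| dy ≤ (x¹)^{γ−1} ( |γ+1| ∫_{ℝ^d_+} ζ(z) dz + N_d ∫_{ℝ^d_+} |Dζ(z)| z¹ dz ), where N_d is a constant depending only on d (one may take N_d = 2). -/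

import Mathlib

open MeasureTheory Finset

section Aux

variable (d : ℕ) [NeZero d]

noncomputable def phi (x y : Fin d → ℝ) : Fin d → ℝ :=
  fun i => if i = 0 then y 0 * x 0 else y 0 * (y i - x i)

noncomputable def phiDeriv (x y : Fin d → ℝ) : (Fin d → ℝ) →L[ℝ] (Fin d → ℝ) :=
  ContinuousLinearMap.pi fun i =>
    if i = 0 then x 0 • ContinuousLinearMap.proj 0
    else (y i - x i) • ContinuousLinearMap.proj 0 + y 0 • ContinuousLinearMap.proj i

noncomputable def Lmap (y : Fin d → ℝ) : (Fin d → ℝ) →L[ℝ] (Fin d → ℝ) :=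
  ContinuousLinearMap.pi fun i =>
    if i = 0 then y 0 • ContinuousLinearMap.proj 0
    else (-(y 0)) • ContinuousLinearMap.proj i

lemma phi_hasFDerivAt (x y : Fin d → ℝ) : HasFDerivAt (phi d x) (phiDeriv d x y) y := by
  rw [hasFDerivAt_pi']
  intro i
  by_cases hi : i = 0
  · subst hi
    simp only [phi, phiDeriv, ContinuousLinearMap.proj_pi, if_pos rfl]
    simpa using ((ContinuousLinearMap.proj (R := ℝ) (φ := fun _ : Fin d => ℝ)
      0).hasFDerivAt (x := y)).mul_const (x 0)
  · simp only [phi, phiDeriv, ContinuousLinearMap.proj_pi, if_neg hi]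
    have h1 := (ContinuousLinearMap.proj (R := ℝ) (φ := fun _ : Fin d => ℝ)
      0).hasFDerivAt (x := y)
    have h2 := ((ContinuousLinearMap.proj (R := ℝ) (φ := fun _ : Fin d => ℝ)
      i).hasFDerivAt (x := y)).sub_const (x i)
    have := h1.mul h2
    simp [add_comm] at this
    exact this

lemma phiLin_hasFDerivAt (x y : Fin d → ℝ) :
    HasFDerivAt (fun x' => phi d x' y) (Lmap d y) x := by
  rw [hasFDerivAt_pi']
  intro i
  by_cases hi : i = 0
  · subst hi
    simp only [phi, Lmap, ContinuousLinearMap.proj_pi, if_pos rfl]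
    simpa [mul_comm] using ((ContinuousLinearMap.proj (R := ℝ) (φ := fun _ : Fin d => ℝ)
      0).hasFDerivAt (x := x)).const_mul (y 0)
  · simp only [phi, Lmap, ContinuousLinearMap.proj_pi, if_neg hi]
    have h2 := (((ContinuousLinearMap.proj (R := ℝ) (φ := fun _ : Fin d => ℝ)
      i).hasFDerivAt (x := x)).const_sub (y i)).const_mul (y 0)
    have he : (-(y 0)) • (ContinuousLinearMap.proj i : (Fin d → ℝ) →L[ℝ] ℝ)
        = y 0 • -ContinuousLinearMap.proj i := by
      ext v; simp [mul_comm]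
    rw [he]
    simpa using h2

lemma phiDeriv_det (x y : Fin d → ℝ) :
    (phiDeriv d x y).det = x 0 * y 0 ^ (d - 1) := by
  have : (phiDeriv d x y).det = LinearMap.det ((phiDeriv d x y) : (Fin d → ℝ) →ₗ[ℝ] (Fin d → ℝ)) := rfl
  rw [this, ← LinearMap.det_toMatrix']
  have hM : ∀ i j, (LinearMap.toMatrix' ((phiDeriv d x y) : (Fin d → ℝ) →ₗ[ℝ] (Fin d → ℝ))) i j
      = if i = 0 then (if j = 0 then x 0 else 0)
        else ((if j = 0 then y i - x i else 0) + if i = j then y 0 else 0) := by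
    intro i j
    rw [LinearMap.toMatrix'_apply]
    simp only [ContinuousLinearMap.coe_coe, phiDeriv, ContinuousLinearMap.pi_apply]
    by_cases hi : i = 0 <;> by_cases hj : j = 0 <;>
      simp [hi, hj, eq_comm, Pi.single_apply]
  rw [Matrix.det_of_lowerTriangular]
  · have hdiag : ∀ i : Fin d, (LinearMap.toMatrix'
        ((phiDeriv d x y) : (Fin d → ℝ) →ₗ[ℝ] (Fin d → ℝ))) i i
        = if i = 0 then x 0 else y 0 := by
      intro i
      rw [hM]
      by_cases hi : i = 0 <;> simp [hi]
    calc ∏ i, (LinearMap.toMatrix' ((phiDeriv d x y) : (Fin d → ℝ) →ₗ[ℝ] (Fin d → ℝ))) i i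
        = ∏ i : Fin d, (if i = 0 then x 0 else y 0) := by
          exact Finset.prod_congr rfl fun i _ => hdiag i
      _ = x 0 * y 0 ^ (d - 1) := by
          rw [← Finset.mul_prod_erase Finset.univ _ (Finset.mem_univ 0)]
          simp only [if_pos rfl]
          congr 1
          rw [Finset.prod_congr rfl (fun i hi => if_neg (Finset.ne_of_mem_erase hi)),
            Finset.prod_const, Finset.card_erase_of_mem (Finset.mem_univ 0),
            Finset.card_univ, Fintype.card_fin]
  · intro i j hij
    have hlt : i < j := hij
    rw [hM]
    have hj0 : j ≠ 0 := by
      intro h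
      subst h
      exact absurd hlt (by simp)
    have hij' : i ≠ j := ne_of_lt hlt
    by_cases hi : i = 0 <;> simp [hi, hj0, hij']

lemma phi_image (x : Fin d → ℝ) (hx : 0 < x 0) :
    (fun y => phi d x y) '' {y : Fin d → ℝ | 0 < y 0} = {z : Fin d → ℝ | 0 < z 0} := by
  ext z
  constructor
  · rintro ⟨y, hy, rfl⟩
    simpa [phi] using mul_pos hy hx
  · intro hz
    refine ⟨fun i => if i = 0 then z 0 / x 0 else x 0 * z i / z 0 + x i, ?_, ?_⟩
    · simpa using div_pos hz hx
    · funext i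
      by_cases hi : i = 0
      · subst hi
        simp [phi, div_mul_cancel₀ _ (ne_of_gt hx)]
      · have hz0 : z 0 ≠ 0 := ne_of_gt hz
        simp only [phi, if_neg hi, eq_self_iff_true, if_true]
        field_simp
        ring

lemma phi_injOn (x : Fin d → ℝ) (hx : 0 < x 0) :
    Set.InjOn (fun y => phi d x y) {y : Fin d → ℝ | 0 < y 0} := by
  intro y hy y' hy' h
  have h0 : y 0 = y' 0 := by
    have := congrFun h 0
    simp only [phi, if_pos rfl] at this
    exact mul_right_cancel₀ (ne_of_gt hx) this
  funext i
  by_cases hi : i = 0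
  · subst hi; exact h0
  · have := congrFun h i
    simp only [phi, if_neg hi] at this
    rw [h0] at this
    have := mul_left_cancel₀ (ne_of_gt (show (0:ℝ) < y' 0 from hy')) this
    linarith



/-- The kernel `ζ^y(x) = (x¹)^{γ+1} ζ(y¹x¹, y¹(y'−x')) (y¹)^{d−1}`. -/
noncomputable def kern (d : ℕ) [NeZero d] (γ : ℝ) (ζ : (Fin d → ℝ) → ℝ)
    (y x : Fin d → ℝ) : ℝ :=
  (x 0) ^ (γ + 1) * ζ (fun i => if i = 0 then y 0 * x 0 else y 0 * (y i - x i)) *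
    (y 0) ^ ((d : ℝ) - 1)

/-- The Euclidean norm of the gradient of a function on `ℝ^d`. -/
noncomputable def gradNorm (d : ℕ) (f : (Fin d → ℝ) → ℝ) (x : Fin d → ℝ) : ℝ :=
  Real.sqrt (∑ i, (fderiv ℝ f x (Pi.single i 1)) ^ 2)

lemma sqrt_sum_sq_add_le (b c : Fin d → ℝ) :
    Real.sqrt (∑ i, (b i + c i)^2) ≤ Real.sqrt (∑ i, (b i)^2) + Real.sqrt (∑ i, (c i)^2) := by
  have := norm_add_le ((WithLp.equiv 2 (Fin d → ℝ)).symm b) ((WithLp.equiv 2 (Fin d → ℝ)).symm c)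
  simpa [EuclideanSpace.norm_eq, Real.norm_eq_abs, sq_abs] using this

lemma kern_hasFDerivAt (γ : ℝ) (ζ : (Fin d → ℝ) → ℝ) (hζ : ContDiff ℝ 1 ζ)
    (y x : Fin d → ℝ) (hx : 0 < x 0) :
    HasFDerivAt (fun x' => kern d γ ζ y x')
      ((y 0 ^ ((d:ℝ)-1)) • ((x 0 ^ (γ+1)) • ((fderiv ℝ ζ (phi d x y)).comp (Lmap d y)) +
        (ζ (phi d x y)) • (((γ+1) * x 0 ^ γ) • ContinuousLinearMap.proj 0))) x := by
  have h1 : HasFDerivAt (fun x' : Fin d → ℝ => (x' 0) ^ (γ+1))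
      (((γ+1) * x 0 ^ γ) • (ContinuousLinearMap.proj 0 : (Fin d → ℝ) →L[ℝ] ℝ)) x := by
    have hd := Real.hasDerivAt_rpow_const (x := x 0) (p := γ+1) (Or.inl (ne_of_gt hx))
    have := hd.comp_hasFDerivAt x
      ((ContinuousLinearMap.proj (R := ℝ) (φ := fun _ : Fin d => ℝ) 0).hasFDerivAt (x := x))
    simp [add_sub_cancel_right] at this
    exact this
  have h2 : HasFDerivAt (fun x' => ζ (phi d x' y))
      ((fderiv ℝ ζ (phi d x y)).comp (Lmap d y)) x :=
    ((hζ.differentiable one_ne_zero) (phi d x y)).hasFDerivAt.comp x (phiLin_hasFDerivAt d x y)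
  have := (h1.mul h2).mul_const (y 0 ^ ((d:ℝ)-1))
  exact this

lemma Lmap_apply (y v : Fin d → ℝ) :
    (Lmap d y) v = fun j => if j = 0 then y 0 * v 0 else -(y 0) * v j := by
  funext j
  by_cases hj : j = 0 <;> simp [Lmap, hj]

lemma Lmap_single (y : Fin d → ℝ) (i : Fin d) :
    (Lmap d y) (Pi.single i 1) =
      if i = 0 then Pi.single 0 (y 0) else Pi.single i (-(y 0)) := by
  rw [Lmap_apply]
  by_cases hi : i = 0
  · subst hi
    funext j
    by_cases hj : j = 0 <;> simp [hj, Pi.single_apply]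
  · rw [if_neg hi]
    funext j
    by_cases hj : j = 0
    · subst hj
      simp [Pi.single_apply, Ne.symm hi]
    · simp [hj, Pi.single_apply]

lemma kern_grad_bound (γ : ℝ) (ζ : (Fin d → ℝ) → ℝ) (hζ : ContDiff ℝ 1 ζ)
    (hζ0 : ∀ z, 0 ≤ ζ z) (y x : Fin d → ℝ) (hy : 0 < y 0) (hx : 0 < x 0) :
    gradNorm d (fun x' => kern d γ ζ y x') x ≤
      |γ+1| * x 0 ^ γ * ζ (phi d x y) * y 0 ^ ((d:ℝ)-1) +
      x 0 ^ (γ+1) * y 0 ^ ((d:ℝ)-1) * y 0 * gradNorm d ζ (phi d x y) := by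
  have hf := kern_hasFDerivAt d γ ζ hζ y x hx
  have hfd := hf.fderiv
  set y0' := y 0 ^ ((d:ℝ)-1) with hy0'
  have hy0'0 : 0 ≤ y0' := Real.rpow_nonneg hy.le _
  set t := (γ+1) * x 0 ^ γ * ζ (phi d x y) * y0' with ht
  set k := x 0 ^ (γ+1) * y0' * y 0 with hk
  have hk0 : 0 ≤ k :=
    mul_nonneg (mul_nonneg (Real.rpow_nonneg hx.le _) hy0'0) hy.le
  set D : Fin d → ℝ := fun i => fderiv ℝ ζ (phi d x y) (Pi.single i 1) with hD
  have ha : ∀ i, fderiv ℝ (fun x' => kern d γ ζ y x') x (Pi.single i 1)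
      = (if i = 0 then t else 0) + (if i = 0 then k * D 0 else -(k * D i)) := by
    intro i
    rw [hfd]
    simp only [ContinuousLinearMap.smul_apply, ContinuousLinearMap.add_apply,
      ContinuousLinearMap.comp_apply, ContinuousLinearMap.proj_apply, Lmap_single]
    by_cases hi : i = 0
    · subst hi
      have h1 : (Pi.single (0 : Fin d) (y 0) : Fin d → ℝ)
          = (y 0) • (Pi.single 0 1 : Fin d → ℝ) := by
        funext j; simp [Pi.single_apply]
      simp only [if_pos rfl, h1, _root_.map_smul]
      simp [t, k, D, Pi.single_apply]
      ring
    · have h1 : (Pi.single i (-(y 0)) : Fin d → ℝ)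
          = (-(y 0)) • (Pi.single i 1 : Fin d → ℝ) := by
        funext j; simp [Pi.single_apply]
      simp only [if_neg hi, h1, _root_.map_smul]
      simp [t, k, D, Pi.single_apply, hi]
      ring
  have habs : |t| = |γ+1| * x 0 ^ γ * ζ (phi d x y) * y0' := by
    rw [ht, abs_mul, abs_mul, abs_mul, abs_of_nonneg (Real.rpow_nonneg hx.le γ),
      abs_of_nonneg (hζ0 _), abs_of_nonneg hy0'0]
  calc gradNorm d (fun x' => kern d γ ζ y x')    x
      = Real.sqrt (∑ i : Fin d,
          ((if i = 0 then t else 0) + (if i = 0 then k * D 0 else -(k * D i)))^2) := by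
        rw [gradNorm]
        congr 1
        exact Finset.sum_congr rfl fun i _ => by rw [ha]
    _ ≤ Real.sqrt (∑ i : Fin d, (if i = 0 then t else 0)^2) +
        Real.sqrt (∑ i : Fin d, (if i = 0 then k * D 0 else -(k * D i))^2) :=
        sqrt_sum_sq_add_le d _ _
    _ = |t| + k * Real.sqrt (∑ i : Fin d, (D i)^2) := by
        congr 1
        · rw [show (∑ i : Fin d, (if i = 0 then t else 0)^2) = t^2 by
            simp [apply_ite (· ^ 2)], Real.sqrt_sq_eq_abs]
        · rw [show (∑ i : Fin d, (if i = 0 then k * D 0 else -(k * D i))^2)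
              = k^2 * ∑ i : Fin d, (D i)^2 by
            rw [Finset.mul_sum]
            refine Finset.sum_congr rfl fun i _ => ?_
            by_cases hi : i = 0 <;> simp [hi] <;> ring]
          rw [Real.sqrt_mul (sq_nonneg k), Real.sqrt_sq_eq_abs, abs_of_nonneg hk0]
    _ = |γ+1| * x 0 ^ γ * ζ (phi d x y) * y0' + k * gradNorm d ζ (phi d x y) := by
        rw [habs, gradNorm]
    _ = _ := by rw [hk]


end Aux

/-- Gradient kernel estimate from the proof of Lemma 6.1.2: for a nonnegative
`C¹` function `ζ` with compact support in `ℝ^d_+` and every `x ∈ ℝ^d_+`,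
`∫_{ℝ^d_+} |D_x ζ^y(x)| dy
  ≤ (x¹)^{γ−1} (|γ+1| ∫ ζ + N_d ∫ |Dζ(z)| z¹ dz)` with `N_d = 2`. -/
theorem stmt7 (d : ℕ) [NeZero d] (γ : ℝ)
    (ζ : (Fin d → ℝ) → ℝ) (hζ : ContDiff ℝ 1 ζ) (hζ0 : ∀ z, 0 ≤ ζ z)
    (hζc : HasCompactSupport ζ) (hζsupp : tsupport ζ ⊆ {z | 0 < z 0})
    (x : Fin d → ℝ) (hx : 0 < x 0) :
    ∫ y in {y : Fin d → ℝ | 0 < y 0}, gradNorm d (fun x' => kern d γ ζ y x') x ≤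
      (x 0) ^ (γ - 1) *
        (|γ + 1| * (∫ z in {z : Fin d → ℝ | 0 < z 0}, ζ z) +
          2 * ∫ z in {z : Fin d → ℝ | 0 < z 0}, gradNorm d ζ z * z 0) := by
  have hs : MeasurableSet {y : Fin d → ℝ | 0 < y 0} :=
    (isOpen_lt continuous_const (continuous_apply 0)).measurableSet
  have hder : ∀ y ∈ {y : Fin d → ℝ | 0 < y 0}, HasFDerivWithinAt (fun y => phi d x y)
      (phiDeriv d x y) {y : Fin d → ℝ | 0 < y 0} y :=
    fun y _ => (phi_hasFDerivAt d x y).hasFDerivWithinAt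
  have hinj := phi_injOn d x hx
  have himg := phi_image d x hx
  -- the two target functions
  set g2 : (Fin d → ℝ) → ℝ := fun z => gradNorm d ζ z * z 0 with hg2
  have hg2cont : Continuous g2 := by
    apply Continuous.mul _ (continuous_apply 0)
    apply Real.continuous_sqrt.comp
    apply continuous_finset_sum
    intro i _
    exact ((ContinuousLinearMap.apply ℝ ℝ (Pi.single i 1)).continuous.comp
      (hζ.continuous_fderiv one_ne_zero)).pow 2
  have hg2supp : HasCompactSupport g2 := by
    apply hζc.mono'
    intro z hz
    have : fderiv ℝ ζ z ≠ 0 := by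
      intro h0
      apply hz
      simp [g2, gradNorm, h0]
    exact support_fderiv_subset ℝ this
  have hζint : IntegrableOn ζ {z : Fin d → ℝ | 0 < z 0} volume :=
    (hζ.continuous.integrable_of_hasCompactSupport hζc).integrableOn
  have hg2int : IntegrableOn g2 {z : Fin d → ℝ | 0 < z 0} volume :=
    (hg2cont.integrable_of_hasCompactSupport hg2supp).integrableOn
  -- change of variables
  have cov : ∀ g : (Fin d → ℝ) → ℝ, ∫ z in {z : Fin d → ℝ | 0 < z 0}, g z =
      ∫ y in {z : Fin d → ℝ | 0 < z 0}, |(phiDeriv d x y).det| • g (phi d x y) := by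
    intro g
    conv_lhs => rw [← himg]
    rw [integral_image_eq_integral_abs_det_fderiv_smul volume hs hder hinj]
  have covi : ∀ g : (Fin d → ℝ) → ℝ, IntegrableOn g {z : Fin d → ℝ | 0 < z 0} volume →
      IntegrableOn (fun y => |(phiDeriv d x y).det| • g (phi d x y)) {z : Fin d → ℝ | 0 < z 0} volume := by
    intro g hg
    rw [← integrableOn_image_iff_integrableOn_abs_det_fderiv_smul volume hs hder hinj, himg]
    exact hg
  -- constants
  set c1 : ℝ := |γ+1| * x 0 ^ γ / x 0 with hc1
  set c2 : ℝ := x 0 ^ (γ+1) / (x 0)^2 with hc2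
  -- pointwise bound
  have hpow : ∀ a : ℝ, 0 < a → a ^ ((d:ℝ)-1) = a ^ (d-1 : ℕ) := by
    intro a ha
    rw [← Real.rpow_natCast a (d-1)]
    congr 1
    have h1 : 1 ≤ d := Nat.one_le_iff_ne_zero.mpr (NeZero.ne d)
    push_cast [Nat.cast_sub h1]
    ring
  have hdet : ∀ y ∈ {y : Fin d → ℝ | 0 < y 0}, |(phiDeriv d x y).det| = x 0 * y 0 ^ (d-1 : ℕ) := by
    intro y hy
    rw [phiDeriv_det]
    exact abs_of_pos (mul_pos hx (pow_pos hy _))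
  have hbound : ∀ y ∈ {y : Fin d → ℝ | 0 < y 0}, gradNorm d (fun x' => kern d γ ζ y x') x ≤
      c1 * (|(phiDeriv d x y).det| • ζ (phi d x y)) +
      c2 * (|(phiDeriv d x y).det| • g2 (phi d x y)) := by
    intro y hy
    have hy0 : (0:ℝ) < y 0 := hy
    refine le_trans (kern_grad_bound d γ ζ hζ hζ0 y x hy0 hx) (le_of_eq ?_)
    rw [smul_eq_mul, smul_eq_mul, hdet y hy, hg2, hpow (y 0) hy0]
    have hphi0 : phi d x y 0 = y 0 * x 0 := by simp [phi]
    beta_reduce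
    rw [hphi0, hc1, hc2]
    field_simp
  -- nonneg of the two integrals
  have hζint0 : 0 ≤ ∫ z in {z : Fin d → ℝ | 0 < z 0}, ζ z := setIntegral_nonneg hs fun z _ => hζ0 z
  have hg2int0 : 0 ≤ ∫ z in {z : Fin d → ℝ | 0 < z 0}, g2 z := setIntegral_nonneg hs fun z hz =>
    mul_nonneg (Real.sqrt_nonneg _) (le_of_lt hz)
  -- integrability of the majorant
  have hmaj : IntegrableOn (fun y => c1 * (|(phiDeriv d x y).det| • ζ (phi d x y)) +
      c2 * (|(phiDeriv d x y).det| • g2 (phi d x y))) {z : Fin d → ℝ | 0 < z 0} volume :=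
    ((covi ζ hζint).const_mul c1).add ((covi g2 hg2int).const_mul c2)
  calc ∫ y in {z : Fin d → ℝ | 0 < z 0}, gradNorm d (fun x' => kern d γ ζ y x') x
      ≤ ∫ y in {z : Fin d → ℝ | 0 < z 0}, (c1 * (|(phiDeriv d x y).det| • ζ (phi d x y)) +
          c2 * (|(phiDeriv d x y).det| • g2 (phi d x y))) := by
        apply integral_mono_of_nonneg
        · exact ae_of_all _ fun y => Real.sqrt_nonneg _
        · exact hmaj
        · exact (ae_restrict_iff' hs).2 (ae_of_all _ hbound)
    _ = c1 * (∫ z in {z : Fin d → ℝ | 0 < z 0}, ζ z) + c2 * (∫ z in {z : Fin d → ℝ | 0 < z 0}, g2 z) := by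
        rw [integral_add ((covi ζ hζint).const_mul c1) ((covi g2 hg2int).const_mul c2),
          integral_const_mul, integral_const_mul, ← cov ζ, ← cov g2]
    _ ≤ (x 0) ^ (γ - 1) * (|γ + 1| * (∫ z in {z : Fin d → ℝ | 0 < z 0}, ζ z) + 2 * ∫ z in {z : Fin d → ℝ | 0 < z 0}, g2 z) := by
        have e1 : c1 = |γ+1| * x 0 ^ (γ-1) := by
          rw [hc1, Real.rpow_sub hx, Real.rpow_one, mul_div_assoc]
        have e2 : c2 = x 0 ^ (γ-1) := by
          rw [hc2, ← Real.rpow_natCast (x 0) 2, ← Real.rpow_sub hx]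
          congr 1
          push_cast
          ring
        rw [e1, e2]
        have hxp : 0 ≤ (x 0 : ℝ) ^ (γ-1) := Real.rpow_nonneg hx.le _
        nlinarith [mul_nonneg hxp hg2int0]
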